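/- In Setting (B): (i) for every j with 2 ≤ j ≤ J−2, Cov(B_j, B_{j+1}) = (1/(J−j))·[σ²_{j,j} − (1/(J−j−1))·Σ_{ℓ=j+1}^{J−1} σ²_{ℓ,j}]; and (ii) for all j, k with 2 ≤ j ≤ J−1, 2 ≤ k ≤ J−1 and k > j+1, Cov(B_j, B_k) = 0. -/

import Mathlib

open MeasureTheory ProbabilityTheory Finset

/-- The covariance of two real random variables (with respect to the ambient
probability measure of a `MeasureSpace`). -/
noncomputable def covar {Ω : Type*} [MeasureSpace Ω] (f g : Ω → ℝ) : ℝ :=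
  ∫ ω, (f ω - ∫ x, f x) * (g ω - ∫ x, g x)


noncomputable def coefB (J j : ℕ) (p : ℕ × ℕ) : ℝ :=
  if p.2 = j then (if p.1 = j - 1 then 1 else 0) + (if j ≤ p.1 then -(((J:ℝ) - j)⁻¹) else 0)
  else if p.2 = j - 1 then
    (if p.1 = j - 1 then -1 else 0) + (if j ≤ p.1 then ((J:ℝ) - j)⁻¹ else 0)
  else 0

lemma coefB_eq_zero (J j : ℕ) (p : ℕ × ℕ) (h1 : p.2 ≠ j) (h2 : p.2 ≠ j - 1) :
    coefB J j p = 0 := by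
  unfold coefB
  rw [if_neg h1, if_neg h2]

lemma sum_coefB (J j : ℕ) (hJ : 3 ≤ J) (h2 : 2 ≤ j) (hj : j ≤ J - 1) (g : ℕ × ℕ → ℝ) :
    ∑ p ∈ Icc 1 (J-1) ×ˢ Icc 1 J, coefB J j p * g p
      = g (j-1, j) - g (j-1, j-1)
        - ((J:ℝ) - j)⁻¹ * ∑ l ∈ Icc j (J-1), (g (l, j) - g (l, j-1)) := by
  rw [Finset.sum_product]
  have hpair : ∀ l ∈ Icc 1 (J-1), ∑ m ∈ Icc 1 J, coefB J j (l, m) * g (l, m)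
      = coefB J j (l, j-1) * g (l, j-1) + coefB J j (l, j) * g (l, j) := by
    intro l _
    rw [← Finset.sum_subset (s₁ := ({j-1, j} : Finset ℕ))
      (by intro m hm; simp only [mem_insert, mem_singleton] at hm
          rw [mem_Icc]; omega)
      (by intro m _ hm; simp only [mem_insert, mem_singleton] at hm; push_neg at hm
          rw [coefB_eq_zero J j (l, m) hm.2 hm.1, zero_mul])]
    rw [Finset.sum_pair (by omega : j - 1 ≠ j)]
  rw [Finset.sum_congr rfl hpair]
  have hfilter : Finset.filter (fun l => j ≤ l) (Icc 1 (J-1)) = Icc j (J-1) := by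
    ext l; simp only [mem_filter, mem_Icc]; omega
  have hcoef1 : ∀ l, coefB J j (l, j-1)
      = (if l = j - 1 then (-1:ℝ) else 0) + (if j ≤ l then ((J:ℝ) - j)⁻¹ else 0) := by
    intro l; unfold coefB; rw [if_neg (by omega : ¬ (j-1 = j)), if_pos rfl]
  have hcoef2 : ∀ l, coefB J j (l, j)
      = (if l = j - 1 then (1:ℝ) else 0) + (if j ≤ l then -(((J:ℝ) - j)⁻¹) else 0) := by
    intro l; unfold coefB; rw [if_pos rfl]
  calc ∑ l ∈ Icc 1 (J-1), (coefB J j (l, j-1) * g (l, j-1) + coefB J j (l, j) * g (l, j))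
      = ∑ l ∈ Icc 1 (J-1),
          (((if l = j - 1 then -g (l, j-1) else 0) + (if j ≤ l then ((J:ℝ) - j)⁻¹ * g (l, j-1) else 0))
          + ((if l = j - 1 then g (l, j) else 0) + (if j ≤ l then -(((J:ℝ) - j)⁻¹) * g (l, j) else 0))) := by
        refine Finset.sum_congr rfl fun l _ => ?_
        rw [hcoef1 l, hcoef2 l]
        by_cases h : l = j - 1
        · simp only [if_pos h, if_neg (show ¬ j ≤ l by omega)]; ring
        · by_cases h' : j ≤ l
          · simp only [if_neg h, if_pos h']; ring
          · simp only [if_neg h, if_neg h']; ring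
    _ = g (j-1, j) - g (j-1, j-1)
        - ((J:ℝ) - j)⁻¹ * ∑ l ∈ Icc j (J-1), (g (l, j) - g (l, j-1)) := by
        rw [Finset.sum_add_distrib, Finset.sum_add_distrib, Finset.sum_add_distrib]
        rw [Finset.sum_ite_eq' (Icc 1 (J-1)) (j-1) (fun l => -g (l, j-1)),
          Finset.sum_ite_eq' (Icc 1 (J-1)) (j-1) (fun l => g (l, j))]
        rw [← Finset.sum_filter, ← Finset.sum_filter, hfilter]
        rw [if_pos (by rw [mem_Icc]; omega), if_pos (by rw [mem_Icc]; omega)]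
        rw [Finset.mul_sum]
        rw [show ∑ i ∈ Icc j (J-1), ((J:ℝ) - j)⁻¹ * (g (i, j) - g (i, j-1))
            = ∑ i ∈ Icc j (J-1), ((J:ℝ) - j)⁻¹ * g (i, j)
              - ∑ i ∈ Icc j (J-1), ((J:ℝ) - j)⁻¹ * g (i, j-1) by
          rw [← Finset.sum_sub_distrib]
          exact Finset.sum_congr rfl fun i _ => by ring]
        simp only [neg_mul, Finset.sum_neg_distrib]
        ring


lemma covar_linear {Ω : Type*} [MeasureSpace Ω] [IsProbabilityMeasure (ℙ : Measure Ω)]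
    {ι : Type*} (s : Finset ι) (f : ι → Ω → ℝ) (c d : ι → ℝ) (C D : ℝ)
    (hL2 : ∀ i ∈ s, MemLp (f i) 2 ℙ)
    (hind : ∀ i ∈ s, ∀ j ∈ s, i ≠ j → IndepFun (f i) (f j) ℙ) :
    covar (fun ω => C + ∑ i ∈ s, c i * f i ω) (fun ω => D + ∑ i ∈ s, d i * f i ω)
      = ∑ i ∈ s, c i * d i * variance (f i) ℙ := by
  classical
  set m : ι → ℝ := fun i => ∫ ω, f i ω with hm
  set g : ι → Ω → ℝ := fun i ω => f i ω - m i with hg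
  have hgL2 : ∀ i ∈ s, MemLp (g i) 2 ℙ := fun i hi => (hL2 i hi).sub (memLp_const _)
  have hfint : ∀ i ∈ s, Integrable (f i) ℙ := fun i hi => (hL2 i hi).integrable one_le_two
  have hgmean : ∀ i ∈ s, (∫ ω, g i ω) = 0 := by
    intro i hi
    simp only [hg]
    rw [integral_sub (hfint i hi) (integrable_const _), integral_const]
    simp [hm]
  have hmul_int : ∀ i ∈ s, ∀ j ∈ s, Integrable (fun ω => g i ω * g j ω) ℙ := by
    intro i hi j hj
    have h1 : MemLp (g i • g j) 1 ℙ :=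
      (hgL2 j hj).smul (hgL2 i hi)
    exact memLp_one_iff_integrable.mp h1
  have hmF : (∫ ω, (C + ∑ i ∈ s, c i * f i ω)) = C + ∑ i ∈ s, c i * m i := by
    rw [integral_add (integrable_const _)
        (integrable_finset_sum _ (fun i hi => (hfint i hi).const_mul _)),
      integral_finset_sum _ (fun i hi => (hfint i hi).const_mul _), integral_const]
    simp [hm, integral_const_mul]
  have hmG : (∫ ω, (D + ∑ i ∈ s, d i * f i ω)) = D + ∑ i ∈ s, d i * m i := by
    rw [integral_add (integrable_const _)
        (integrable_finset_sum _ (fun i hi => (hfint i hi).const_mul _)),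
      integral_finset_sum _ (fun i hi => (hfint i hi).const_mul _), integral_const]
    simp [hm, integral_const_mul]
  have e1 : ∀ (e : ι → ℝ) (ω : Ω), (C + ∑ i ∈ s, e i * f i ω) - (C + ∑ i ∈ s, e i * m i)
      = ∑ i ∈ s, e i * g i ω := by
    intro e ω
    rw [add_sub_add_left_eq_sub, ← Finset.sum_sub_distrib]
    exact Finset.sum_congr rfl fun i _ => by simp only [hg]; ring
  have e2 : ∀ (e : ι → ℝ) (ω : Ω), (D + ∑ i ∈ s, e i * f i ω) - (D + ∑ i ∈ s, e i * m i)
      = ∑ i ∈ s, e i * g i ω := by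
    intro e ω
    rw [add_sub_add_left_eq_sub, ← Finset.sum_sub_distrib]
    exact Finset.sum_congr rfl fun i _ => by simp only [hg]; ring
  have key : covar (fun ω => C + ∑ i ∈ s, c i * f i ω) (fun ω => D + ∑ i ∈ s, d i * f i ω)
      = ∫ ω, (∑ i ∈ s, c i * g i ω) * (∑ j ∈ s, d j * g j ω) := by
    unfold covar
    simp only []
    rw [hmF, hmG]
    congr 1
    funext ω
    rw [e1 c ω, e2 d ω]
  rw [key]
  have expand : ∀ ω : Ω, (∑ i ∈ s, c i * g i ω) * (∑ j ∈ s, d j * g j ω)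
      = ∑ i ∈ s, ∑ j ∈ s, (c i * d j) * (g i ω * g j ω) := by
    intro ω
    rw [Finset.sum_mul_sum]
    exact Finset.sum_congr rfl fun i _ => Finset.sum_congr rfl fun j _ => by ring
  calc (∫ ω, (∑ i ∈ s, c i * g i ω) * (∑ j ∈ s, d j * g j ω))
      = ∫ ω, ∑ i ∈ s, ∑ j ∈ s, (c i * d j) * (g i ω * g j ω) := by
        congr 1; funext ω; exact expand ω
    _ = ∑ i ∈ s, ∑ j ∈ s, ∫ ω, (c i * d j) * (g i ω * g j ω) := by
        rw [integral_finset_sum _ (fun i hi => integrable_finset_sum _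
          (fun j hj => (hmul_int i hi j hj).const_mul _))]
        exact Finset.sum_congr rfl fun i hi =>
          integral_finset_sum _ (fun j hj => (hmul_int i hi j hj).const_mul _)
    _ = ∑ i ∈ s, ∑ j ∈ s, (if j = i then c i * d i * variance (f i) ℙ else 0) := by
        refine Finset.sum_congr rfl fun i hi => Finset.sum_congr rfl fun j hj => ?_
        rw [integral_const_mul]
        by_cases h : j = i
        · subst h
          rw [if_pos rfl]
          have hvar : variance (f j) ℙ = ∫ ω, g j ω * g j ω := by
            rw [variance_eq_integral (hL2 j hj).aestronglyMeasurable.aemeasurable]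
            congr 1
            funext ω
            simp only [hg, Pi.pow_apply, Pi.sub_apply, hm]
            ring
          rw [hvar]
        · rw [if_neg h]
          have hgind : IndepFun (g i) (g j) ℙ :=
            (hind i hi j hj (fun e => h e.symm)).comp
              (measurable_id.sub_const (m i)) (measurable_id.sub_const (m j))
          rw [hgind.integral_fun_mul_eq_mul_integral (hgL2 i hi).aestronglyMeasurable (hgL2 j hj).aestronglyMeasurable,
            hgmean i hi, hgmean j hj]
          ring
    _ = ∑ i ∈ s, c i * d i * variance (f i) ℙ := by
        refine Finset.sum_congr rfl fun i hi => ?_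
        rw [Finset.sum_ite_eq' s i (fun _ => c i * d i * variance (f i) ℙ), if_pos hi]


lemma coefB_snd_pred (J j : ℕ) (hj : 1 ≤ j) (l : ℕ) :
    coefB J j (l, j - 1)
      = (if l = j - 1 then (-1:ℝ) else 0) + (if j ≤ l then ((J:ℝ) - j)⁻¹ else 0) := by
  unfold coefB
  rw [if_neg (by omega : ¬ (j - 1 = j)), if_pos rfl]

/-- **Covariances of the crossover contrasts `B_j`, `B_k` in Setting (B):**
adjacent periods have the displayed covariance, and non-adjacent periods are uncorrelated. -/
theorem stmt_11
    {Ω : Type*} [MeasureSpace Ω] [IsProbabilityMeasure (ℙ : Measure Ω)]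
    (J : ℕ) (hJ : 3 ≤ J)
    (μc β τsq : ℝ) (θ : ℕ → ℝ) (σsq : ℕ → ℕ → ℝ)
    (α : ℕ → Ω → ℝ) (ε : ℕ → ℕ → Ω → ℝ)
    (hmα : ∀ i, Measurable (α i)) (hmε : ∀ i j, Measurable (ε i j))
    -- the random variables {α_i} ∪ {ε_{i,j}} are mutually independent
    (hindep : iIndepFun
      (fun x : {x : ℕ ⊕ ℕ × ℕ // (∀ i, x = Sum.inl i → i ∈ Icc 1 (J - 1)) ∧
          (∀ i j, x = Sum.inr (i, j) → i ∈ Icc 1 (J - 1) ∧ j ∈ Icc 1 J)} =>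
        Sum.elim α (fun q => ε q.1 q.2) x.1) ℙ)
    -- moment assumptions
    (hEα : ∀ i ∈ Icc 1 (J - 1), ∫ ω, α i ω ∂ℙ = 0)
    (hVα : ∀ i ∈ Icc 1 (J - 1), variance (α i) ℙ = τsq)
    (hL2α : ∀ i ∈ Icc 1 (J - 1), MemLp (α i) 2 ℙ)
    (hEε : ∀ i ∈ Icc 1 (J - 1), ∀ j ∈ Icc 1 J, ∫ ω, ε i j ω ∂ℙ = 0)
    (hVε : ∀ i ∈ Icc 1 (J - 1), ∀ j ∈ Icc 1 J, variance (ε i j) ℙ = σsq i j)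
    (hL2ε : ∀ i ∈ Icc 1 (J - 1), ∀ j ∈ Icc 1 J, MemLp (ε i j) 2 ℙ)
    -- the mixed effects model: cluster i is on intervention in periods j > i
    (Y : ℕ → ℕ → Ω → ℝ)
    (hY : ∀ i j ω, Y i j ω = μc + α i ω + θ j + (if i < j then β else 0) + ε i j ω)
    -- the crossover contrast B_j
    (B : ℕ → Ω → ℝ)
    (hB : ∀ j ω, B j ω = Y (j - 1) j ω - Y (j - 1) (j - 1) ω
        - ((J : ℝ) - (j : ℝ))⁻¹ * ∑ l ∈ Icc j (J - 1), (Y l j ω - Y l (j - 1) ω))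
    :
    (∀ j ∈ Icc 2 (J - 2),
        covar (B j) (B (j + 1))
          = ((J : ℝ) - (j : ℝ))⁻¹ *
              (σsq j j - ((J : ℝ) - (j : ℝ) - 1)⁻¹ * ∑ l ∈ Icc (j + 1) (J - 1), σsq l j))
      ∧ (∀ j ∈ Icc 2 (J - 1), ∀ k ∈ Icc 2 (J - 1), j + 1 < k →
          covar (B j) (B k) = 0) := by

  classical
  have hεL2 : ∀ p ∈ Icc 1 (J-1) ×ˢ Icc 1 J, MemLp (ε p.1 p.2) 2 (ℙ : Measure Ω) := by
    intro p hp
    rw [Finset.mem_product] at hp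
    exact hL2ε p.1 hp.1 p.2 hp.2
  have hεvar : ∀ p ∈ Icc 1 (J-1) ×ˢ Icc 1 J, variance (ε p.1 p.2) ℙ = σsq p.1 p.2 := by
    intro p hp
    rw [Finset.mem_product] at hp
    exact hVε p.1 hp.1 p.2 hp.2
  have hεind : ∀ p ∈ Icc 1 (J-1) ×ˢ Icc 1 J, ∀ q ∈ Icc 1 (J-1) ×ˢ Icc 1 J, p ≠ q →
      IndepFun (ε p.1 p.2) (ε q.1 q.2) ℙ := by
    intro p hp q hq hpq
    rw [Finset.mem_product] at hp hq
    have hp' : (∀ i, (Sum.inr p : ℕ ⊕ ℕ × ℕ) = Sum.inl i → i ∈ Icc 1 (J - 1)) ∧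
        (∀ i j, (Sum.inr p : ℕ ⊕ ℕ × ℕ) = Sum.inr (i, j) →
          i ∈ Icc 1 (J - 1) ∧ j ∈ Icc 1 J) := by
      refine ⟨fun i h => absurd h (by simp), fun i j h => ?_⟩
      rw [Sum.inr.injEq] at h
      subst h
      exact ⟨hp.1, hp.2⟩
    have hq' : (∀ i, (Sum.inr q : ℕ ⊕ ℕ × ℕ) = Sum.inl i → i ∈ Icc 1 (J - 1)) ∧
        (∀ i j, (Sum.inr q : ℕ ⊕ ℕ × ℕ) = Sum.inr (i, j) →
          i ∈ Icc 1 (J - 1) ∧ j ∈ Icc 1 J) := by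
      refine ⟨fun i h => absurd h (by simp), fun i j h => ?_⟩
      rw [Sum.inr.injEq] at h
      subst h
      exact ⟨hq.1, hq.2⟩
    exact hindep.indepFun (i := ⟨Sum.inr p, hp'⟩) (j := ⟨Sum.inr q, hq'⟩)
      (by simp only [ne_eq, Subtype.mk.injEq, Sum.inr.injEq]; exact hpq)
  have hBrep : ∀ j, 2 ≤ j → j ≤ J - 1 →
      B j = fun ω => β + ∑ p ∈ Icc 1 (J-1) ×ˢ Icc 1 J, coefB J j p * ε p.1 p.2 ω := by
    intro j hj2 hj1
    funext ω
    have hsc := sum_coefB J j hJ hj2 hj1 (fun p => ε p.1 p.2 ω)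
    simp only at hsc
    rw [hsc, hB]
    have hsum : ∑ l ∈ Icc j (J-1), (Y l j ω - Y l (j-1) ω)
        = ((J - j : ℕ) : ℝ) * (θ j - θ (j-1)) + ∑ l ∈ Icc j (J-1), (ε l j ω - ε l (j-1) ω) := by
      have hterm : ∀ l ∈ Icc j (J-1), Y l j ω - Y l (j-1) ω
          = (θ j - θ (j-1)) + (ε l j ω - ε l (j-1) ω) := by
        intro l hl
        rw [Finset.mem_Icc] at hl
        rw [hY, hY, if_neg (by omega), if_neg (by omega)]
        ring
      rw [Finset.sum_congr rfl hterm, Finset.sum_add_distrib, Finset.sum_const, Nat.card_Icc,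
        nsmul_eq_mul]
      have hc : J - 1 + 1 - j = J - j := by omega
      rw [hc]
    rw [hsum, hY (j-1) j ω, hY (j-1) (j-1) ω, if_pos (show j - 1 < j by omega),
      if_neg (show ¬ (j - 1 < j - 1) by omega), Nat.cast_sub (by omega : j ≤ J)]
    have hne : (J:ℝ) - (j:ℝ) ≠ 0 := by
      have : (j:ℝ) < (J:ℝ) := by exact_mod_cast (show j < J by omega)
      linarith
    field_simp
    ring
  have hcov : ∀ j k, 2 ≤ j → j ≤ J - 1 → 2 ≤ k → k ≤ J - 1 →
      covar (B j) (B k)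
        = ∑ p ∈ Icc 1 (J-1) ×ˢ Icc 1 J, coefB J j p * (coefB J k p * σsq p.1 p.2) := by
    intro j k hj2 hj1 hk2 hk1
    have hcl := covar_linear (Icc 1 (J-1) ×ˢ Icc 1 J) (fun p : ℕ × ℕ => ε p.1 p.2)
      (coefB J j) (coefB J k) β β hεL2 hεind
    rw [hBrep j hj2 hj1, hBrep k hk2 hk1, hcl]
    refine Finset.sum_congr rfl fun p hp => ?_
    rw [hεvar p hp]
    ring
  constructor
  · intro j hj
    rw [Finset.mem_Icc] at hj
    have hj2 : 2 ≤ j := hj.1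
    have hju : j ≤ J - 2 := hj.2
    rw [hcov j (j+1) hj2 (by omega) (by omega) (by omega)]
    have hsc := sum_coefB J j hJ hj2 (by omega)
      (fun p => coefB J (j+1) p * σsq p.1 p.2)
    simp only at hsc
    rw [hsc]
    have e1 : coefB J (j+1) (j-1, j) = 0 := by
      have h := coefB_snd_pred J (j+1) (by omega) (j-1)
      rw [show (j+1) - 1 = j from rfl] at h
      rw [h, if_neg (by omega : ¬ (j - 1 = j)), if_neg (by omega : ¬ (j + 1 ≤ j - 1))]
      ring
    have e2 : coefB J (j+1) (j-1, j-1) = 0 :=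
      coefB_eq_zero J (j+1) (j-1, j-1) (by show j - 1 ≠ j + 1; omega)
        (by show j - 1 ≠ (j+1) - 1; omega)
    have e3 : ∀ l, coefB J (j+1) (l, j)
        = (if l = j then (-1:ℝ) else 0) + (if j+1 ≤ l then ((J:ℝ) - (↑(j+1) : ℝ))⁻¹ else 0) := by
      intro l
      have h := coefB_snd_pred J (j+1) (by omega) l
      rw [show (j+1) - 1 = j from rfl] at h
      exact h
    have e4 : ∀ l, coefB J (j+1) (l, j-1) = 0 := fun l =>
      coefB_eq_zero J (j+1) (l, j-1) (by show j - 1 ≠ j + 1; omega)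
        (by show j - 1 ≠ (j+1) - 1; omega)
    rw [e1, e2]
    rw [Finset.sum_congr rfl (fun l _ => by
      rw [e3 l, e4 l]
      ring : ∀ l ∈ Icc j (J-1), coefB J (j+1) (l, j) * σsq l j - coefB J (j+1) (l, j-1) * σsq l (j-1)
        = ((if l = j then (-1:ℝ) else 0) + (if j+1 ≤ l then ((J:ℝ) - (↑(j+1) : ℝ))⁻¹ else 0)) * σsq l j)]
    rw [show Icc j (J-1) = insert j (Icc (j+1) (J-1)) by
      ext x; simp only [Finset.mem_insert, Finset.mem_Icc]; omega]
    rw [Finset.sum_insert (by simp only [Finset.mem_Icc]; omega)]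
    rw [if_pos rfl, if_neg (by omega : ¬ (j + 1 ≤ j))]
    rw [Finset.sum_congr rfl (fun l hl => by
      rw [Finset.mem_Icc] at hl
      rw [if_neg (by omega : ¬ (l = j)), if_pos (by omega : j + 1 ≤ l)] :
        ∀ l ∈ Icc (j+1) (J-1),
          ((if l = j then (-1:ℝ) else 0) + (if j+1 ≤ l then ((J:ℝ) - (↑(j+1) : ℝ))⁻¹ else 0)) * σsq l j
          = (0 + ((J:ℝ) - (↑(j+1) : ℝ))⁻¹) * σsq l j)]
    push_cast
    rw [Finset.sum_congr rfl (fun l _ => by ring :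
      ∀ l ∈ Icc (j+1) (J-1), ((0:ℝ) + ((J:ℝ) - ((j:ℝ)+1))⁻¹) * σsq l j
        = ((J:ℝ) - (j:ℝ) - 1)⁻¹ * σsq l j)]
    rw [← Finset.mul_sum]
    ring
  · intro j hj k hk hjk
    rw [Finset.mem_Icc] at hj hk
    rw [hcov j k hj.1 hj.2 hk.1 hk.2]
    rw [Finset.sum_congr rfl (fun p hp => by
      by_cases h : p.2 = j ∨ p.2 = j - 1
      · rcases h with h | h <;>
          rw [coefB_eq_zero J k p (by omega) (by omega), zero_mul, mul_zero]
      · push_neg at h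
        rw [coefB_eq_zero J j p h.1 h.2, zero_mul] :
      ∀ p ∈ Icc 1 (J-1) ×ˢ Icc 1 J, coefB J j p * (coefB J k p * σsq p.1 p.2) = 0)]
    exact Finset.sum_const_zero
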